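/- Let V₁, …, V_l be nonzero proper subspaces of ℂ^n satisfying V_{j+1} ∩ V_j^⊥ = {0} for all j = 1, …, l−1. Then for every s ≤ l, the kernel of the composition Π_{V_l}^⊥ ∘ ⋯ ∘ Π_{V_s}^⊥ equals V_s. -/

import Mathlib

noncomputable def projc {n : ℕ} (V : Submodule ℂ (EuclideanSpace ℂ (Fin n))) :
    EuclideanSpace ℂ (Fin n) →L[ℂ] EuclideanSpace ℂ (Fin n) :=
  V.subtypeL.comp (Submodule.orthogonalProjection V)

/-- `Π_V^⊥ = 1 - Π_V`, the orthogonal projection onto `Vᗮ`. -/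
noncomputable def projPerp {n : ℕ} (V : Submodule ℂ (EuclideanSpace ℂ (Fin n))) :
    EuclideanSpace ℂ (Fin n) →L[ℂ] EuclideanSpace ℂ (Fin n) :=
  1 - projc V

lemma projPerp_apply {n : ℕ} (V : Submodule ℂ (EuclideanSpace ℂ (Fin n)))
    (x : EuclideanSpace ℂ (Fin n)) :
    projPerp V x = x - (Submodule.orthogonalProjection V x : EuclideanSpace ℂ (Fin n)) := by
  simp [projPerp, projc]

lemma projPerp_eq_zero_iff {n : ℕ} (V : Submodule ℂ (EuclideanSpace ℂ (Fin n)))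
    (x : EuclideanSpace ℂ (Fin n)) :
    projPerp V x = 0 ↔ x ∈ V := by
  rw [projPerp_apply, sub_eq_zero, eq_comm]
  exact Submodule.starProjection_eq_self_iff

lemma projPerp_mem_orthogonal {n : ℕ} (V : Submodule ℂ (EuclideanSpace ℂ (Fin n)))
    (x : EuclideanSpace ℂ (Fin n)) :
    projPerp V x ∈ Vᗮ := by
  rw [projPerp_apply]
  exact Submodule.sub_starProjection_mem_orthogonal x

/-- If `V 0, …, V (l-1)` are nonzero proper subspaces of `ℂ^n` with
`V (j+1) ⊓ (V j)ᗮ = ⊥`, then for every `s < l` the kernel of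
`Π^⊥_{V (l-1)} ∘ ⋯ ∘ Π^⊥_{V s}` is `V s`. -/
theorem ker_comp_projPerp {n l : ℕ} (V : ℕ → Submodule ℂ (EuclideanSpace ℂ (Fin n)))
    (hbot : ∀ j, j < l → V j ≠ ⊥) (htop : ∀ j, j < l → V j ≠ ⊤)
    (hnonint : ∀ j, j + 1 < l → V (j + 1) ⊓ (V j)ᗮ = ⊥) :
    ∀ s, s < l →
      LinearMap.ker ((((List.range (l - s)).map (fun i => projPerp (V (l - 1 - i)))).prod :
          EuclideanSpace ℂ (Fin n) →L[ℂ] EuclideanSpace ℂ (Fin n)) :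
          EuclideanSpace ℂ (Fin n) →ₗ[ℂ] EuclideanSpace ℂ (Fin n))
        = V s := by
  have aux : ∀ k, 0 < k → k ≤ l →
      LinearMap.ker ((((List.range k).map (fun i => projPerp (V (l - 1 - i)))).prod :
          EuclideanSpace ℂ (Fin n) →L[ℂ] EuclideanSpace ℂ (Fin n)) :
          EuclideanSpace ℂ (Fin n) →ₗ[ℂ] EuclideanSpace ℂ (Fin n))
        = V (l - k) := by
    intro k
    induction k with
    | zero => omega
    | succ k ih =>
      intro _ hkl
      rw [List.range_succ, List.map_append, List.prod_append]
      rcases Nat.eq_zero_or_pos k with hk0 | hkpos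
      · subst hk0
        ext x
        simp [LinearMap.mem_ker, projPerp_eq_zero_iff]
      · have ihk := ih hkpos (by omega)
        have hW : l - 1 - k = l - (k + 1) := by omega
        have hsucc : l - k = (l - (k + 1)) + 1 := by omega
        have hint : V (l - k) ⊓ (V (l - (k + 1)))ᗮ = ⊥ := by
          rw [hsucc]
          exact hnonint _ (by omega)
        ext x
        simp only [LinearMap.mem_ker, List.map_cons, List.map_nil, List.prod_cons,
          List.prod_nil, mul_one, ContinuousLinearMap.coe_coe, ContinuousLinearMap.mul_apply, hW]
        constructor
        · intro hx
          have h1 : projPerp (V (l - (k + 1))) x ∈ V (l - k) := by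
            rw [← ihk]; exact hx
          have h2 : projPerp (V (l - (k + 1))) x ∈ (V (l - (k + 1)))ᗮ :=
            projPerp_mem_orthogonal _ x
          have h0 : projPerp (V (l - (k + 1))) x = 0 := by
            have := hint ▸ (Submodule.mem_inf.mpr ⟨h1, h2⟩)
            simpa using this
          rw [← projPerp_eq_zero_iff]
          exact h0
        · intro hx
          have h0 : projPerp (V (l - (k + 1))) x = 0 :=
            (projPerp_eq_zero_iff _ _).mpr hx
          rw [h0]
          simp [LinearMap.mem_ker] at *
  intro s hs
  have := aux (l - s) (by omega) (by omega)
  rwa [show l - (l - s) = s by omega] at this
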